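/- arXiv:2002.06094 — 4 statements merged into one kernel-verified Lean document; each statement's English description precedes it below -/
import Mathlib

section
/- Let x(t) solve ẋ₁ = x₁, ẋ₂ = -x₂ + x₁x₃², ẋ₃ = -x₃ on an interval where x₁(t)x₃(t)² > 0, and fix M > 0. Define y₁ = x₁, y₂ = x₂ - x₁x₃² ln(M/(x₁x₃²)), y₃ = x₃. Then ẏ₁ = y₁, ẏ₂ = -y₂, ẏ₃ = -y₃ on that interval. -/
/-- Along a solution of `ẋ₁ = x₁, ẋ₂ = -x₂ + x₁x₃², ẋ₃ = -x₃` on an open interval where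
`x₁x₃² > 0`, with `M > 0`, the variables `y₁ = x₁`, `y₂ = x₂ - x₁x₃² ln(M/(x₁x₃²))`,
`y₃ = x₃` satisfy `ẏ₁ = y₁, ẏ₂ = -y₂, ẏ₃ = -y₃`. -/
theorem stmt11 (I : Set ℝ) (hI : IsOpen I) (hI' : I.OrdConnected)
    (M : ℝ) (hM : 0 < M) (x1 x2 x3 y1 y2 y3 : ℝ → ℝ)
    (h1 : ∀ t ∈ I, HasDerivAt x1 (x1 t) t)
    (h2 : ∀ t ∈ I, HasDerivAt x2 (-(x2 t) + x1 t * (x3 t) ^ 2) t)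
    (h3 : ∀ t ∈ I, HasDerivAt x3 (-(x3 t)) t)
    (hpos : ∀ t ∈ I, 0 < x1 t * (x3 t) ^ 2)
    (hy1 : ∀ t, y1 t = x1 t)
    (hy2 : ∀ t, y2 t = x2 t - x1 t * (x3 t) ^ 2 * Real.log (M / (x1 t * (x3 t) ^ 2)))
    (hy3 : ∀ t, y3 t = x3 t) :
    ∀ t ∈ I, HasDerivAt y1 (y1 t) t ∧ HasDerivAt y2 (-(y2 t)) t ∧
      HasDerivAt y3 (-(y3 t)) t := by
  intro t ht
  have hfy1 : y1 = x1 := funext hy1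
  have hfy3 : y3 = x3 := funext hy3
  set u : ℝ → ℝ := fun s => x1 s * x3 s ^ 2 with hu_def
  have hut : (0:ℝ) < u t := hpos t ht
  have hune : u t ≠ 0 := ne_of_gt hut
  -- derivative of u
  have hu : HasDerivAt u (-(u t)) t := by
    have := (h1 t ht).mul ((h3 t ht).pow 2)
    convert this using 1
    · rfl
    · rfl
    · rfl
    simp [hu_def]
    ring
  have hlog : HasDerivAt (fun s => Real.log (u s)) (-(u t) / u t) t := hu.log hune
  have hfy2 : y2 = fun s => x2 s - u s * (Real.log M - Real.log (u s)) := by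
    funext s
    rw [hy2 s]
    rcases eq_or_ne (u s) 0 with h | h
    · simp only [hu_def] at h ⊢
      simp [h]
    · simp only [hu_def] at h ⊢
      rw [Real.log_div hM.ne' h]
  refine ⟨by rw [hfy1]; exact h1 t ht, ?_, by rw [hfy3]; exact h3 t ht⟩
  rw [hfy2]
  have hd : HasDerivAt (fun s => x2 s - u s * (Real.log M - Real.log (u s)))
      ((-(x2 t) + u t) - ((-(u t)) * (Real.log M - Real.log (u t)) + u t * (0 - (-(u t) / u t)))) t := by
    exact (h2 t ht).sub (hu.mul ((hasDerivAt_const t (Real.log M)).sub hlog))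
  convert hd using 1
  field_simp
  ring
end

section
/- Let A be an n×n real matrix and Ŵ : ℝⁿ → ℝⁿ continuous and bounded, with all eigenvalues of A having negative real part. Let φ be the flow of ẋ = f(x) and suppose x(t) = φ_t(x₀). Define z(t) = -∫_{-∞}^0 e^{-As} Ŵ(φ_s(x(t))) ds. Then z is differentiable and ż(t) = A z(t) - Ŵ(x(t)). -/
open MeasureTheory Matrix

attribute [local instance] Matrix.linftyOpNormedRing Matrix.linftyOpNormedAlgebra

open NormedSpace Polynomial Filter
open scoped ENNReal NNReal

namespace Stmt14Aux

variable {n : ℕ}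

lemma norm_map_ofReal (M : Matrix (Fin n) (Fin n) ℝ) :
    ‖M.map Complex.ofReal‖ = ‖M‖ := by
  rw [Matrix.linfty_opNorm_def, Matrix.linfty_opNorm_def]
  congr 1
  refine Finset.sup_congr rfl fun i _ => Finset.sum_congr rfl fun j _ => ?_
  simp [Matrix.map_apply]

lemma exists_eigenvector (B : Matrix (Fin n) (Fin n) ℂ) {μ : ℂ} (hμ : μ ∈ spectrum ℂ B) :
    ∃ v : Fin n → ℂ, v ≠ 0 ∧ B *ᵥ v = μ • v := by
  rw [spectrum.mem_iff] at hμ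
  have hdet : (algebraMap ℂ (Matrix (Fin n) (Fin n) ℂ) μ - B).det = 0 := by
    by_contra h
    exact hμ ((Matrix.isUnit_iff_isUnit_det _).2 (Ne.isUnit h))
  obtain ⟨v, hv0, hv⟩ := Matrix.exists_mulVec_eq_zero_iff.2 hdet
  refine ⟨v, hv0, ?_⟩
  rw [Algebra.algebraMap_eq_smul_one, Matrix.sub_mulVec, Matrix.smul_mulVec,
    Matrix.one_mulVec, sub_eq_zero] at hv
  exact hv.symm

lemma pow_mulVec (B : Matrix (Fin n) (Fin n) ℂ) {μ : ℂ} {v : Fin n → ℂ}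
    (hv : B *ᵥ v = μ • v) (k : ℕ) : (B ^ k) *ᵥ v = μ ^ k • v := by
  induction k with
  | zero => simp [Matrix.one_mulVec]
  | succ k ih =>
    rw [pow_succ, ← Matrix.mulVec_mulVec, hv, Matrix.mulVec_smul, ih, smul_smul, ← pow_succ']

lemma exp_mulVec (B : Matrix (Fin n) (Fin n) ℂ) {μ : ℂ} {v : Fin n → ℂ}
    (hv : B *ᵥ v = μ • v) : (exp B) *ᵥ v = Complex.exp μ • v := by
  classical
  let L0 : Matrix (Fin n) (Fin n) ℂ →ₗ[ℂ] (Fin n → ℂ) :=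
    { toFun := fun M => M *ᵥ v
      map_add' := fun M N => Matrix.add_mulVec M N v
      map_smul' := fun c M => Matrix.smul_mulVec c M v }
  let L : Matrix (Fin n) (Fin n) ℂ →L[ℂ] (Fin n → ℂ) := LinearMap.toContinuousLinearMap L0
  have hL : ∀ M, L M = M *ᵥ v := fun M => rfl
  have hsum : Summable fun k : ℕ => ((Nat.factorial k : ℂ))⁻¹ • B ^ k := expSeries_summable' B
  have h1 : (exp B) *ᵥ v = ∑' k : ℕ, ((Nat.factorial k : ℂ))⁻¹ • (B ^ k *ᵥ v) := by
    rw [← hL, exp_eq_tsum ℂ, L.map_tsum hsum]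
    exact tsum_congr fun k => (hL _).trans (Matrix.smul_mulVec _ _ _)
  have h2 : ∀ k : ℕ, ((Nat.factorial k : ℂ))⁻¹ • (B ^ k *ᵥ v) = (((Nat.factorial k : ℂ))⁻¹ * μ ^ k) • v := by
    intro k; rw [pow_mulVec B hv k, smul_smul]
  have h3 : Summable fun k : ℕ => ((Nat.factorial k : ℂ))⁻¹ * μ ^ k := by
    simpa only [smul_eq_mul] using expSeries_summable' (𝕂 := ℂ) (𝔸 := ℂ) μ
  rw [h1]
  simp only [h2]
  rw [h3.tsum_smul_const]
  congr 1
  rw [Complex.exp_eq_exp_ℂ, exp_eq_tsum ℂ]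
  simp [smul_eq_mul]

lemma aeval_mulVec (B : Matrix (Fin n) (Fin n) ℂ) {μ : ℂ} {v : Fin n → ℂ}
    (hv : B *ᵥ v = μ • v) (q : ℂ[X]) : (aeval B q) *ᵥ v = q.eval μ • v := by
  induction q using Polynomial.induction_on' with
  | add p q hp hq => rw [map_add, Matrix.add_mulVec, hp, hq, eval_add, add_smul]
  | monomial k a =>
    have h : algebraMap ℂ (Matrix (Fin n) (Fin n) ℂ) a * B ^ k = a • B ^ k := by
      rw [Algebra.algebraMap_eq_smul_one, smul_mul_assoc, one_mul]
    rw [aeval_monomial, eval_monomial, h, Matrix.smul_mulVec, pow_mulVec B hv k,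
      smul_smul]

lemma exp_poly (B : Matrix (Fin n) (Fin n) ℂ) :
    ∃ q : ℂ[X], aeval B q = exp B := by
  classical
  set S : Submodule ℂ (Matrix (Fin n) (Fin n) ℂ) :=
    Submodule.span ℂ (Set.range fun k : ℕ => B ^ k) with hS
  have hclosed : IsClosed (S : Set (Matrix (Fin n) (Fin n) ℂ)) :=
    Submodule.closed_of_finiteDimensional S
  have hsum : HasSum (fun k : ℕ => ((Nat.factorial k : ℂ))⁻¹ • B ^ k) (exp B) := by
    rw [exp_eq_tsum ℂ]
    exact (expSeries_summable' (𝕂 := ℂ) B).hasSum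
  have hmem : exp B ∈ S := by
    refine hclosed.mem_of_tendsto hsum ?_
    exact Filter.Eventually.of_forall fun s => Submodule.sum_mem S fun k _ =>
      Submodule.smul_mem S _ (Submodule.subset_span ⟨k, rfl⟩)
  rw [hS, Finsupp.mem_span_range_iff_exists_finsupp] at hmem
  obtain ⟨c, hc⟩ := hmem
  refine ⟨c.sum fun k a => Polynomial.C a * Polynomial.X ^ k, ?_⟩
  rw [map_finsuppSum, ← hc]
  exact Finsupp.sum_congr fun k _ => by simp [Algebra.smul_def]

lemma decay (A : Matrix (Fin n) (Fin n) ℝ)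
    (hA : ∀ μ ∈ spectrum ℂ (A.map Complex.ofReal), μ.re < 0) :
    ∃ K > (0:ℝ), ∃ c > (0:ℝ), ∀ u : ℝ, 0 ≤ u →
      ‖exp (u • A)‖ ≤ K * Real.exp (-(c * u)) := by
  rcases Nat.eq_zero_or_pos n with hn | hn
  · subst hn
    refine ⟨1, one_pos, 1, one_pos, fun u hu => ?_⟩
    have h0 : exp (u • A) = 0 := by
      apply Matrix.ext; intro i j; exact absurd i.2 (Nat.not_lt_zero _)
    rw [h0, norm_zero]; positivity
  haveI : Nonempty (Fin n) := ⟨⟨0, hn⟩⟩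
  set B : Matrix (Fin n) (Fin n) ℂ := A.map Complex.ofReal with hB
  haveI : Nontrivial (Matrix (Fin n) (Fin n) ℂ) := by
    refine ⟨⟨1, 0, fun h => ?_⟩⟩
    have h2 := congrFun (congrFun h ⟨0, hn⟩) ⟨0, hn⟩
    simp [Matrix.one_apply_eq] at h2
  -- transfer norms from ℝ to ℂ
  have hcontmap : Continuous fun M : Matrix (Fin n) (Fin n) ℝ => M.map Complex.ofReal :=
    continuous_matrix fun i j =>
      Complex.continuous_ofReal.comp ((continuous_apply j).comp (continuous_apply i))
  have hexpmap : ∀ u : ℝ, (exp (u • A)).map Complex.ofReal = exp (u • B) := by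
    intro u
    have h1 : (exp (u • A)).map Complex.ofReal = exp ((u • A).map Complex.ofReal) :=
      map_exp (Complex.ofRealHom.mapMatrix (m := Fin n)) hcontmap (u • A)
    have h2 : (u • A).map Complex.ofReal = u • B := by
      rw [hB]
      ext i j
      simp only [Matrix.map_apply, Matrix.smul_apply, smul_eq_mul, Complex.ofReal_mul,
        Complex.real_smul]
    rw [h1, h2]
  have hnorm : ∀ u : ℝ, ‖exp (u • A)‖ = ‖exp (u • B)‖ := by
    intro u
    rw [← norm_map_ofReal, hexpmap u]
  -- spectral radius of `exp B` is < 1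
  obtain ⟨q, hq⟩ := exp_poly B
  have hspec : ∀ z ∈ spectrum ℂ (exp B), ‖z‖₊ < 1 := by
    intro z hz
    rw [← hq, spectrum.map_polynomial_aeval] at hz
    obtain ⟨μ, hμ, rfl⟩ := hz
    obtain ⟨v, hv0, hv⟩ := exists_eigenvector B hμ
    have h1 : q.eval μ • v = Complex.exp μ • v := by
      rw [← aeval_mulVec B hv q, hq, exp_mulVec B hv]
    have h2 : q.eval μ = Complex.exp μ := by
      have h3 := sub_eq_zero.2 h1
      rw [← sub_smul] at h3
      rcases smul_eq_zero.1 h3 with h | h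
      · exact sub_eq_zero.1 h
      · exact absurd h hv0
    have h4 : ‖Complex.exp μ‖ < 1 := by
      rw [Complex.norm_exp]
      exact Real.exp_lt_one_iff.2 (hA μ hμ)
    show ‖eval μ q‖₊ < 1
    rw [h2]
    have h5 : (‖Complex.exp μ‖₊ : ℝ) < 1 := by rwa [coe_nnnorm]
    exact_mod_cast h5
  have r_lt : spectralRadius ℂ (exp B) < 1 := by
    have h := spectrum.spectralRadius_lt_of_forall_lt (exp B) (r := 1) hspec
    simpa using h
  obtain ⟨ρ, hrρ, hρ1⟩ := ENNReal.lt_iff_exists_nnreal_btwn.1 r_lt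
  have hρ0 : 0 < (ρ : ℝ) := by
    have h : (0:ℝ≥0∞) < (ρ : ℝ≥0∞) := lt_of_le_of_lt zero_le hrρ
    exact_mod_cast h
  have hρlt1 : (ρ : ℝ) < 1 := by exact_mod_cast hρ1
  have htend := spectrum.pow_norm_pow_one_div_tendsto_nhds_spectralRadius (exp B)
  obtain ⟨N, hN⟩ := Filter.eventually_atTop.1 (htend.eventually_lt_const hrρ)
  have key : ∀ k : ℕ, max N 1 ≤ k → ‖(exp B) ^ k‖ ≤ (ρ:ℝ) ^ k := by
    intro k hk
    have hk1 : 1 ≤ k := le_trans (le_max_right _ _) hk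
    have hkN : N ≤ k := le_trans (le_max_left _ _) hk
    have hkne : (k:ℝ) ≠ 0 := Nat.cast_ne_zero.2 (by omega)
    have h1 : ‖(exp B) ^ k‖ ^ (1 / (k:ℝ)) < (ρ:ℝ) := by
      have h := hN k hkN
      rwa [← ENNReal.ofReal_coe_nnreal, ENNReal.ofReal_lt_ofReal_iff hρ0] at h
    have hx0 : (0:ℝ) ≤ ‖(exp B) ^ k‖ := norm_nonneg _
    have h2 : (‖(exp B) ^ k‖ ^ (1 / (k:ℝ))) ^ (k:ℕ) ≤ (ρ:ℝ) ^ (k:ℕ) :=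
      pow_le_pow_left₀ (Real.rpow_nonneg hx0 _) h1.le k
    rwa [← Real.rpow_natCast (‖(exp B) ^ k‖ ^ (1 / (k:ℝ))) k, ← Real.rpow_mul hx0,
      one_div_mul_cancel hkne, Real.rpow_one] at h2
  set Nr : ℝ := ((max N 1 : ℕ) : ℝ) with hNr
  have hNr1 : (1:ℝ) ≤ Nr := by
    rw [hNr]; exact_mod_cast Nat.one_le_iff_ne_zero.2 (by omega)
  have hcontexp : Continuous fun u : ℝ => exp (u • B) :=
    exp_continuous.comp (continuous_id.smul continuous_const)
  obtain ⟨M₁, hM₁⟩ := (isCompact_Icc (a := (0:ℝ)) (b := Nr + 1)).exists_bound_of_continuousOn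
    hcontexp.continuousOn
  have hM₁0 : 0 ≤ M₁ := le_trans (norm_nonneg _) (hM₁ 0 ⟨le_refl _, by linarith⟩)
  set K₀ : ℝ := (M₁ + 1) * ((ρ:ℝ) ^ (Nr + 1))⁻¹ with hK₀
  have hρNr : (0:ℝ) < (ρ:ℝ) ^ (Nr + 1) := Real.rpow_pos_of_pos hρ0 _
  have hmain : ∀ u : ℝ, 0 ≤ u → ‖exp (u • B)‖ ≤ K₀ * (ρ:ℝ) ^ u := by
    intro u hu
    have hρu : (0:ℝ) < (ρ:ℝ) ^ u := Real.rpow_pos_of_pos hρ0 _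
    rcases le_or_gt u Nr with hcase | hcase
    · have h1 : ‖exp (u • B)‖ ≤ M₁ := hM₁ u ⟨hu, by linarith⟩
      have h2 : (ρ:ℝ) ^ (Nr + 1) ≤ (ρ:ℝ) ^ u :=
        Real.rpow_le_rpow_of_exponent_ge hρ0 hρlt1.le (by linarith)
      have h3 : (1:ℝ) ≤ ((ρ:ℝ) ^ (Nr + 1))⁻¹ * (ρ:ℝ) ^ u := by
        rw [inv_mul_eq_div]
        exact (one_le_div hρNr).2 h2
      calc ‖exp (u • B)‖ ≤ M₁ := h1
        _ ≤ (M₁ + 1) * (((ρ:ℝ) ^ (Nr + 1))⁻¹ * (ρ:ℝ) ^ u) := by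
            nlinarith [h3]
        _ = K₀ * (ρ:ℝ) ^ u := by rw [hK₀]; ring
    · set k : ℕ := ⌊u⌋₊ with hk
      have hk_le : (k:ℝ) ≤ u := Nat.floor_le hu
      have hk_lt : u < (k:ℝ) + 1 := Nat.lt_floor_add_one u
      have hkN : max N 1 ≤ k := Nat.le_floor (by rw [← hNr] at *; push_cast; linarith)
      have hsplit : u • B = (u - (k:ℝ)) • B + (k:ℝ) • B := by
        rw [← add_smul]; ring_nf
      have hcomm : Commute ((u - (k:ℝ)) • B) ((k:ℝ) • B) :=
        ((Commute.refl B).smul_left _).smul_right _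
      have hdec : exp (u • B) = exp ((u - (k:ℝ)) • B) * exp ((k:ℝ) • B) := by
        rw [hsplit, Matrix.exp_add_of_commute _ _ hcomm]
      have hfrac : ‖exp ((u - (k:ℝ)) • B)‖ ≤ M₁ :=
        hM₁ _ ⟨by linarith, by linarith⟩
      have hpow : ‖exp ((k:ℝ) • B)‖ ≤ (ρ:ℝ) ^ (k:ℕ) := by
        rw [Nat.cast_smul_eq_nsmul ℝ k B, Matrix.exp_nsmul]
        exact key k hkN
      have h1 : ‖exp (u • B)‖ ≤ M₁ * (ρ:ℝ) ^ (k:ℕ) := by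
        rw [hdec]
        exact le_trans (norm_mul_le _ _) (mul_le_mul hfrac hpow (norm_nonneg _) hM₁0)
      have h2 : ((ρ:ℝ) ^ (k:ℕ) : ℝ) ≤ (ρ:ℝ) ^ (u - 1) := by
        rw [← Real.rpow_natCast (ρ:ℝ) k]
        exact Real.rpow_le_rpow_of_exponent_ge hρ0 hρlt1.le (by linarith)
      have h3 : (ρ:ℝ) ^ (u - 1) = (ρ:ℝ) ^ u / (ρ:ℝ) := by
        rw [Real.rpow_sub hρ0, Real.rpow_one]
      have h4 : (ρ:ℝ) ^ (Nr + 1) ≤ (ρ:ℝ) := by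
        have := Real.rpow_le_rpow_of_exponent_ge hρ0 hρlt1.le
          (show (1:ℝ) ≤ Nr + 1 by linarith)
        rwa [Real.rpow_one] at this
      have h5 : ((ρ:ℝ))⁻¹ ≤ ((ρ:ℝ) ^ (Nr + 1))⁻¹ := by
        apply inv_anti₀ hρNr h4
      calc ‖exp (u • B)‖ ≤ M₁ * (ρ:ℝ) ^ (k:ℕ) := h1
        _ ≤ M₁ * ((ρ:ℝ) ^ u / (ρ:ℝ)) := by
            rw [← h3]; exact mul_le_mul_of_nonneg_left h2 hM₁0
        _ = (M₁ * ((ρ:ℝ))⁻¹) * (ρ:ℝ) ^ u := by ring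
        _ ≤ K₀ * (ρ:ℝ) ^ u := by
            apply mul_le_mul_of_nonneg_right _ hρu.le
            rw [hK₀]
            exact mul_le_mul (by linarith) h5 (by positivity) (by linarith)
  refine ⟨K₀ + 1, ?_, -Real.log (ρ:ℝ), ?_, ?_⟩
  · have : 0 ≤ K₀ := by rw [hK₀]; positivity
    linarith
  · exact neg_pos.2 (Real.log_neg hρ0 hρlt1)
  · intro u hu
    have h1 : Real.exp (-(-Real.log (ρ:ℝ) * u)) = (ρ:ℝ) ^ u := by
      rw [Real.rpow_def_of_pos hρ0]; ring_nf
    rw [hnorm u, h1]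
    have h2 := hmain u hu
    have h3 : (0:ℝ) < (ρ:ℝ) ^ u := Real.rpow_pos_of_pos hρ0 _
    nlinarith

end Stmt14Aux

/-- Let `A` be Hurwitz (all eigenvalues with negative real part), `Ŵ` continuous and
bounded, `x` a continuous solution curve of the flow `φ` (so `φ_s(x(t)) = x(t+s)`),
and `z(t) = -∫_{-∞}^0 e^{-As} Ŵ(φ_s(x(t))) ds`. Then `ż = A z - Ŵ(x(t))`. -/
theorem stmt14 (n : ℕ) (A : Matrix (Fin n) (Fin n) ℝ)
    (hA : ∀ μ ∈ spectrum ℂ (A.map Complex.ofReal), μ.re < 0)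
    (W : (Fin n → ℝ) → (Fin n → ℝ)) (hW : Continuous W)
    (C : ℝ) (hWb : ∀ x, ‖W x‖ ≤ C)
    (φ : ℝ → (Fin n → ℝ) → (Fin n → ℝ))
    (x : ℝ → Fin n → ℝ) (hx : Continuous x)
    (hflow : ∀ s t, φ s (x t) = x (t + s))
    (z : ℝ → Fin n → ℝ)
    (hz : ∀ t, z t = -∫ s in Set.Iic (0:ℝ), (NormedSpace.exp (-(s • A))) *ᵥ W (φ s (x t))) :
    ∀ t, HasDerivAt z (A *ᵥ z t - W (x t)) t := by
  classical
  obtain ⟨K, hK, c, hc, hdecay⟩ := Stmt14Aux.decay A hA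
  have hC0 : 0 ≤ C := le_trans (norm_nonneg _) (hWb (x 0))
  set g : ℝ → Fin n → ℝ := fun u => NormedSpace.exp (-(u • A)) *ᵥ W (x u) with hgdef
  have hexpcont : Continuous fun u : ℝ => NormedSpace.exp (-(u • A)) :=
    NormedSpace.exp_continuous.comp ((continuous_id.smul continuous_const).neg)
  have hgcont : Continuous g := hexpcont.matrix_mulVec (hW.comp hx)
  have hgbound : ∀ u : ℝ, u ≤ 0 → ‖g u‖ ≤ K * C * Real.exp (c * u) := by
    intro u hu
    have h1 : ‖g u‖ ≤ ‖NormedSpace.exp (-(u • A))‖ * ‖W (x u)‖ :=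
      Matrix.linfty_opNorm_mulVec _ _
    have h2 : -(u • A) = (-u) • A := (neg_smul u A).symm
    have h3 : ‖NormedSpace.exp ((-u) • A)‖ ≤ K * Real.exp (-(c * -u)) :=
      hdecay (-u) (by linarith)
    have h4 : -(c * -u) = c * u := by ring
    rw [h2] at h1
    rw [h4] at h3
    calc ‖g u‖ ≤ (K * Real.exp (c * u)) * C :=
          le_trans h1 (mul_le_mul h3 (hWb _) (norm_nonneg _) (by positivity))
      _ = K * C * Real.exp (c * u) := by ring
  -- integrability
  have hexpint : IntegrableOn (fun u : ℝ => K * C * Real.exp (c * u)) (Set.Iic (0:ℝ)) := by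
    have h1 : IntegrableOn (fun u : ℝ => K * C * Real.exp (-c * u)) (Set.Ioi (0:ℝ)) :=
      (exp_neg_integrableOn_Ioi 0 hc).const_mul _
    have h2 : Integrable ((Set.Ioi (0:ℝ)).indicator fun u : ℝ => K * C * Real.exp (-c * u)) :=
      (integrable_indicator_iff measurableSet_Ioi).2 h1
    have h3 := h2.comp_neg
    have h4 : (fun u : ℝ => ((Set.Ioi (0:ℝ)).indicator fun w : ℝ => K * C * Real.exp (-c * w)) (-u))
        = (Set.Iio (0:ℝ)).indicator fun u : ℝ => K * C * Real.exp (c * u) := by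
      funext u
      by_cases hu : u < 0
      · rw [Set.indicator_of_mem (by simpa using hu), Set.indicator_of_mem (Set.mem_Iio.2 hu)]
        ring_nf
      · rw [Set.indicator_of_notMem (by simpa using hu),
          Set.indicator_of_notMem (fun hmem => hu (Set.mem_Iio.1 hmem))]
    rw [h4] at h3
    rw [integrableOn_Iic_iff_integrableOn_Iio]
    exact (integrable_indicator_iff measurableSet_Iio).1 h3
  have hgint0 : IntegrableOn g (Set.Iic (0:ℝ)) := by
    apply Integrable.mono' hexpint hgcont.aestronglyMeasurable.restrict
    filter_upwards [ae_restrict_mem measurableSet_Iic] with u hu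
    exact hgbound u hu
  have hgint : ∀ r : ℝ, IntegrableOn g (Set.Iic r) := by
    intro r
    rcases le_or_gt r 0 with h | h
    · exact hgint0.mono_set (Set.Iic_subset_Iic.2 h)
    · have h2 : IntegrableOn g (Set.Icc 0 r) := hgcont.integrableOn_Icc
      have h3 : Set.Iic r ⊆ Set.Iic 0 ∪ Set.Icc 0 r := by
        intro w hw
        rcases le_or_gt w 0 with hw0 | hw0
        · exact Or.inl hw0
        · exact Or.inr ⟨hw0.le, hw⟩
      exact (hgint0.union h2).mono_set h3
  set F : ℝ → Fin n → ℝ := fun r => ∫ u in Set.Iic r, g u with hFdef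
  have hFderiv : ∀ r : ℝ, HasDerivAt F (g r) r := by
    intro r
    have h0 : ∀ s : ℝ, F s = F 0 + ∫ u in (0:ℝ)..s, g u := by
      intro s
      rw [← intervalIntegral.integral_Iic_sub_Iic (hgint 0) (hgint s)]
      simp only [hFdef]
      abel
    have h1 : HasDerivAt (fun s : ℝ => F 0 + ∫ u in (0:ℝ)..s, g u) (g r) r :=
      ((hgcont.integral_hasStrictDerivAt 0 r).hasDerivAt).const_add (F 0)
    have h2 : F = fun s : ℝ => F 0 + ∫ u in (0:ℝ)..s, g u := funext h0
    rw [h2]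
    exact h1
  -- mulVec as a continuous bilinear map
  let Lbil : Matrix (Fin n) (Fin n) ℝ →ₗ[ℝ] ((Fin n → ℝ) →L[ℝ] (Fin n → ℝ)) :=
    { toFun := fun M => LinearMap.toContinuousLinearMap (Matrix.mulVecLin M)
      map_add' := by
        intro M N; ext v
        simp [Matrix.add_mulVec]
      map_smul' := by
        intro a M; ext v
        simp [Matrix.smul_mulVec] }
  let L : Matrix (Fin n) (Fin n) ℝ →L[ℝ] ((Fin n → ℝ) →L[ℝ] (Fin n → ℝ)) :=
    LinearMap.toContinuousLinearMap Lbil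
  have hL : ∀ (M : Matrix (Fin n) (Fin n) ℝ) (v : Fin n → ℝ), L M v = M *ᵥ v :=
    fun M v => rfl
  have hzeq : ∀ r : ℝ, z r = -(L (NormedSpace.exp (r • A)) (F r)) := by
    intro r
    rw [hz r]
    congr 1
    have step2 : ∀ u : ℝ, L (NormedSpace.exp (r • A)) (g u)
        = NormedSpace.exp (-((u - r) • A)) *ᵥ W (x u) := by
      intro u
      rw [hL, hgdef]
      simp only
      rw [Matrix.mulVec_mulVec]
      congr 1
      rw [← Matrix.exp_add_of_commute _ _ ((((Commute.refl A).smul_left r).smul_right u).neg_right)]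
      congr 1
      rw [sub_smul]
      abel
    have step1 : L (NormedSpace.exp (r • A)) (F r)
        = ∫ u in Set.Iic r, NormedSpace.exp (-((u - r) • A)) *ᵥ W (x u) := by
      rw [hFdef]
      simp only
      rw [← ContinuousLinearMap.integral_comp_comm _ (hgint r)]
      exact setIntegral_congr_fun measurableSet_Iic fun u _ => step2 u
    set h : ℝ → Fin n → ℝ := fun s => NormedSpace.exp (-(s • A)) *ᵥ W (x (r + s)) with hh
    have step3 : ∫ u in Set.Iic r, NormedSpace.exp (-((u - r) • A)) *ᵥ W (x u)
        = ∫ s in Set.Iic (0:ℝ), h s := by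
      have e1 : ∀ u : ℝ, NormedSpace.exp (-((u - r) • A)) *ᵥ W (x u) = h (u - r) := by
        intro u
        rw [hh]
        simp only
        rw [add_sub_cancel]
      have e2 : ∀ u : ℝ, (Set.Iic r).indicator (fun w => h (w - r)) u
          = (Set.Iic (0:ℝ)).indicator h (u + -r) := by
        intro u
        by_cases hu : u ≤ r
        · rw [Set.indicator_of_mem (Set.mem_Iic.2 hu),
            Set.indicator_of_mem (Set.mem_Iic.2 (by linarith))]
          rw [sub_eq_add_neg]
        · rw [Set.indicator_of_notMem (fun hmem => hu (Set.mem_Iic.1 hmem)),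
            Set.indicator_of_notMem (fun hmem => hu (by linarith [Set.mem_Iic.1 hmem]))]
      calc ∫ u in Set.Iic r, NormedSpace.exp (-((u - r) • A)) *ᵥ W (x u)
          = ∫ u in Set.Iic r, h (u - r) := by
            exact setIntegral_congr_fun measurableSet_Iic fun u _ => e1 u
        _ = ∫ u, (Set.Iic r).indicator (fun w => h (w - r)) u :=
            (integral_indicator measurableSet_Iic).symm
        _ = ∫ u, (Set.Iic (0:ℝ)).indicator h (u + -r) := by
            exact integral_congr_ae (Filter.Eventually.of_forall e2)
        _ = ∫ s, (Set.Iic (0:ℝ)).indicator h s := by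
            exact integral_add_right_eq_self _ _
        _ = ∫ s in Set.Iic (0:ℝ), h s := integral_indicator measurableSet_Iic
    have step4 : ∫ s in Set.Iic (0:ℝ), NormedSpace.exp (-(s • A)) *ᵥ W (φ s (x r))
        = ∫ s in Set.Iic (0:ℝ), h s := by
      refine setIntegral_congr_fun measurableSet_Iic fun s _ => ?_
      rw [hh]
      simp only
      rw [hflow]
    rw [step4, step1, step3]
  intro t
  have hE : HasDerivAt (fun u : ℝ => NormedSpace.exp (u • A))
      (A * NormedSpace.exp (t • A)) t := hasDerivAt_exp_smul_const' A t
  have hCd : HasDerivAt (fun u : ℝ => L (NormedSpace.exp (u • A)))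
      (L (A * NormedSpace.exp (t • A))) t :=
    L.hasFDerivAt.comp_hasDerivAt t hE
  have hprod : HasDerivAt (fun u : ℝ => L (NormedSpace.exp (u • A)) (F u))
      (L (A * NormedSpace.exp (t • A)) (F t) + L (NormedSpace.exp (t • A)) (g t)) t :=
    hCd.clm_apply (hFderiv t)
  have hfinal := hprod.neg
  have hEinv : NormedSpace.exp (t • A) * NormedSpace.exp (-(t • A)) = 1 := by
    rw [← Matrix.exp_add_of_commute _ _ ((Commute.refl (t • A)).neg_right), add_neg_cancel,
      NormedSpace.exp_zero]
  have hval : -(L (A * NormedSpace.exp (t • A)) (F t)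
      + L (NormedSpace.exp (t • A)) (g t))
      = A *ᵥ (-(L (NormedSpace.exp (t • A)) (F t))) - W (x t) := by
    rw [hL, hL, hL, hgdef]
    simp only
    rw [Matrix.mulVec_mulVec, hEinv, Matrix.one_mulVec, ← Matrix.mulVec_mulVec,
      Matrix.mulVec_neg]
    abel
  have hzfun : z = fun u : ℝ => -(L (NormedSpace.exp (u • A)) (F u)) := funext hzeq
  rw [hzfun]
  exact hval ▸ hfinal
end

section
/- Define H : (-π, π) → ℝ by H(x) = x + tan(x/2) ∫₀ˣ (φ - sin φ)/(1 - cos φ) dφ for x ≠ 0 and H(0) = 0. Then H is a strictly increasing continuous bijection from (-π, π) onto ℝ. -/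
open Real


noncomputable def gg : ℝ → ℝ := fun φ => (φ - Real.sin φ) / (1 - Real.cos φ)

noncomputable def AA : ℝ → ℝ := fun y => (2 * Real.tan (y/2) - y) / Real.tan (y/2)

lemma one_sub_cos_eq (t : ℝ) : 1 - Real.cos t = 2 * Real.sin (t/2) ^ 2 := by
  have h1 := Real.sin_sq_eq_half_sub (t/2)
  rw [show 2*(t/2) = t by ring] at h1
  linarith

lemma one_sub_cos_ge (φ : ℝ) (h : |φ| ≤ 1) : φ^2/4 ≤ 1 - Real.cos φ := by
  rcases eq_or_ne φ 0 with rfl | h0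
  · simp
  · have key : ∀ t : ℝ, 0 < t → t ≤ 1 → t^2/4 ≤ 1 - Real.cos t := by
      intro t ht ht1
      have hs : t/2 - (t/2)^3/4 < Real.sin (t/2) := by
        have := Real.sin_gt_sub_cube (by positivity : (0:ℝ) < t/2)
        linarith [pow_pos (by positivity : (0:ℝ) < t/2) 3]
      have h1 := one_sub_cos_eq t
      have ht2 : t^2 ≤ 1 := by nlinarith
      have ht3 : t^3 ≤ t := by nlinarith [sq_nonneg t]
      have hpos : 0 < t/2 - (t/2)^3/4 := by nlinarith
      have hsq : Real.sin (t/2)^2 ≥ (t/2 - (t/2)^3/4)^2 := by nlinarith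
      have h4 : t^4 ≤ t^2 := by nlinarith [sq_nonneg t]
      have h6 : 0 ≤ t^6 := by positivity
      nlinarith [hsq, h4, h6]
    rcases lt_or_gt_of_ne h0 with hneg | hpos
    · have := key (-φ) (by linarith) (by rw [abs_of_neg hneg] at h; linarith)
      simpa using this
    · exact key φ hpos (by rwa [abs_of_pos hpos] at h)

lemma gg_neg (φ : ℝ) : gg (-φ) = - gg φ := by
  unfold gg
  rw [Real.sin_neg, Real.cos_neg, ← neg_div]
  congr 1; ring

lemma gg_bound (φ : ℝ) (h : |φ| ≤ 1) : |gg φ| ≤ |φ| := by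
  have key : ∀ t : ℝ, 0 < t → t ≤ 1 → 0 ≤ gg t ∧ gg t ≤ t := by
    intro t ht ht1
    have hden : 0 < 1 - Real.cos t :=
      lt_of_lt_of_le (by positivity) (one_sub_cos_ge t (by rwa [abs_of_pos ht]))
    have hnum1 : Real.sin t < t := Real.sin_lt ht
    have hnum2 : t - t^3/4 < Real.sin t := by
      have := Real.sin_gt_sub_cube ht; linarith [pow_pos ht 3]
    unfold gg
    constructor
    · apply div_nonneg (by linarith) hden.le
    · rw [div_le_iff₀ hden]
      have := one_sub_cos_ge t (by rwa [abs_of_pos ht])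
      nlinarith
  rcases lt_trichotomy φ 0 with hneg | rfl | hpos
  · have h2 := key (-φ) (by linarith) (by rw [abs_of_neg hneg] at h; linarith)
    rw [gg_neg] at h2
    rw [abs_of_neg hneg, abs_of_nonpos (by linarith [h2.1])]
    linarith [h2.2]
  · simp [gg]
  · have h2 := key φ hpos (by rwa [abs_of_pos hpos] at h)
    rw [abs_of_pos hpos, abs_of_nonneg h2.1]
    exact h2.2

lemma slope_key (t : ℝ) (ht : 0 < t) (ht1 : t ≤ 1/2) :
    0 ≤ (Real.tan t - t)/(t * Real.tan t) ∧ (Real.tan t - t)/(t * Real.tan t) ≤ 2*t := by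
  have hπ : t < π/2 := lt_of_le_of_lt ht1 (by linarith [Real.pi_gt_three])
  have hcos : 0 < Real.cos t := Real.cos_pos_of_mem_Ioo ⟨by linarith, hπ⟩
  have htan : t < Real.tan t := Real.lt_tan ht hπ
  have htanpos : 0 < Real.tan t := lt_trans ht htan
  have hden : 0 < t * Real.tan t := mul_pos ht htanpos
  have hsin1 : Real.sin t < t := Real.sin_lt ht
  have hsin2 : t - t^3/4 < Real.sin t := by
    have := Real.sin_gt_sub_cube ht; linarith [pow_pos ht 3]
  have hcos2 : 1 - t^2/2 ≤ Real.cos t := Real.one_sub_sq_div_two_le_cos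
  have hcos3 : Real.cos t ≤ 1 := Real.cos_le_one t
  refine ⟨div_nonneg (by linarith) hden.le, ?_⟩
  rw [div_le_iff₀ hden, Real.tan_eq_sin_div_cos]
  have ht2 : t^2 ≤ 1/4 := by nlinarith
  have ht5 : t^5 ≤ t^3/4 := by nlinarith [pow_pos ht 3]
  have hkey : Real.sin t - t * Real.cos t ≤ 2*t^2 * Real.sin t := by nlinarith [pow_pos ht 3]
  rw [div_sub' hcos.ne', ← sub_nonneg]
  have : 2*t*(t*(Real.sin t/Real.cos t)) - (Real.sin t - Real.cos t * t)/Real.cos t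
      = (2*t^2*Real.sin t - (Real.sin t - t*Real.cos t))/Real.cos t := by
    field_simp
  rw [this]
  exact div_nonneg (by linarith) hcos.le

lemma slope_abs (φ : ℝ) (h0 : φ ≠ 0) (h : |φ| ≤ 1) : |AA φ / φ| ≤ |φ| := by
  have key : ∀ ψ : ℝ, 0 < ψ → |ψ| ≤ 1 → |AA ψ / ψ| ≤ |ψ| := by
    intro ψ hψ hψ1
    rw [abs_of_pos hψ] at hψ1 ⊢
    have ht : 0 < ψ/2 := by linarith
    have ht1 : ψ/2 ≤ 1/2 := by linarith
    obtain ⟨k1, k2⟩ := slope_key (ψ/2) ht ht1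
    have htanpos : 0 < Real.tan (ψ/2) := by
      have hπ : ψ/2 < π/2 := lt_of_le_of_lt ht1 (by linarith [Real.pi_gt_three])
      exact lt_trans ht (Real.lt_tan ht hπ)
    have heq : AA ψ / ψ = (Real.tan (ψ/2) - ψ/2)/((ψ/2) * Real.tan (ψ/2)) := by
      unfold AA
      field_simp
    rw [heq, abs_of_nonneg k1]
    linarith
  rcases lt_or_gt_of_ne h0 with hneg | hpos
  · have h2 := key (-φ) (by linarith) (by rwa [abs_neg])
    have hA : AA (-φ) = AA φ := by
      unfold AA
      rw [show -φ/2 = -(φ/2) by ring, Real.tan_neg]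
      rw [show (2 * -Real.tan (φ/2) - -φ) = -(2 * Real.tan (φ/2) - φ) by ring, neg_div_neg_eq]
    rw [hA, abs_neg, div_neg, abs_neg] at h2
    exact h2
  · exact key φ hpos h

lemma hasDerivAt_AA_zero : HasDerivAt AA 0 0 := by
  rw [hasDerivAt_iff_tendsto_slope]
  have hA0 : AA 0 = 0 := by simp [AA]
  apply squeeze_zero_norm' (a := fun φ : ℝ => |φ|)
  · have hmem : {φ : ℝ | |φ| ≤ 1} ∈ nhdsWithin (0:ℝ) {(0:ℝ)}ᶜ := by
      apply mem_nhdsWithin_of_mem_nhds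
      have : Metric.ball (0:ℝ) 1 ∈ nhds (0:ℝ) := Metric.ball_mem_nhds _ one_pos
      filter_upwards [this] with φ hφ
      simp [Metric.mem_ball, Real.dist_eq] at hφ
      exact hφ.le
    filter_upwards [hmem, self_mem_nhdsWithin] with φ hφ1 hφ2
    have h0 : φ ≠ 0 := hφ2
    rw [slope_def_field, hA0]
    simpa [Real.norm_eq_abs, abs_div] using (abs_div (AA φ) φ) ▸ slope_abs φ h0 hφ1
  · have : Filter.Tendsto (fun φ : ℝ => |φ|) (nhds 0) (nhds 0) := by
      simpa using continuous_abs.tendsto (0:ℝ)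
    exact this.mono_left nhdsWithin_le_nhds

lemma cos_half_pos {y : ℝ} (hy : y ∈ Set.Ioo (-π) π) : 0 < Real.cos (y/2) :=
  Real.cos_pos_of_mem_Ioo ⟨by linarith [hy.1], by linarith [hy.2]⟩

lemma sin_half_ne {y : ℝ} (hy : y ∈ Set.Ioo (-π) π) (h0 : y ≠ 0) : Real.sin (y/2) ≠ 0 := by
  rcases lt_or_gt_of_ne h0 with hneg | hpos
  · have : 0 < Real.sin (-(y/2)) :=
      Real.sin_pos_of_pos_of_lt_pi (by linarith) (by linarith [hy.1, Real.pi_pos])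
    rw [Real.sin_neg] at this
    linarith
  · exact (Real.sin_pos_of_pos_of_lt_pi (by linarith) (by linarith [hy.2, Real.pi_pos])).ne'

lemma hasDerivAt_AA {φ : ℝ} (hφ : φ ∈ Set.Ioo (-π) π) : HasDerivAt AA (gg φ) φ := by
  rcases eq_or_ne φ 0 with rfl | h0
  · have : gg 0 = 0 := by simp [gg]
    rw [this]
    exact hasDerivAt_AA_zero
  · have hs : Real.sin (φ/2) ≠ 0 := sin_half_ne hφ h0
    have hc : 0 < Real.cos (φ/2) := cos_half_pos hφ
    have hcd : HasDerivAt (fun y : ℝ => Real.cos (y/2)) (-Real.sin (φ/2) * (1/2)) φ :=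
      HasDerivAt.comp (h₂ := Real.cos) φ (Real.hasDerivAt_cos (φ/2)) ((hasDerivAt_id φ).div_const 2)
    have hsd : HasDerivAt (fun y : ℝ => Real.sin (y/2)) (Real.cos (φ/2) * (1/2)) φ :=
      HasDerivAt.comp (h₂ := Real.sin) φ (Real.hasDerivAt_sin (φ/2)) ((hasDerivAt_id φ).div_const 2)
    have hq := hcd.div hsd hs
    have hm := (hasDerivAt_id φ).mul hq
    have hB := (hasDerivAt_const φ (2:ℝ)).sub hm
    simp only [id_eq] at hB
    have hpyth : Real.sin (φ/2)^2 + Real.cos (φ/2)^2 = 1 := Real.sin_sq_add_cos_sq (φ/2)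
    have hval : (0 : ℝ) - (1 * (Real.cos (φ/2)/Real.sin (φ/2)) +
        φ * ((-Real.sin (φ/2) * (1/2) * Real.sin (φ/2) - Real.cos (φ/2) * (Real.cos (φ/2) * (1/2)))/Real.sin (φ/2)^2)) = gg φ := by
      have h1 : (-Real.sin (φ/2) * (1/2) * Real.sin (φ/2) - Real.cos (φ/2) * (Real.cos (φ/2) * (1/2))) = -(1/2) := by
        linear_combination (-(1:ℝ)/2) * hpyth
      rw [h1]
      have hsc : Real.sin φ = 2 * Real.sin (φ/2) * Real.cos (φ/2) := by
        rw [← Real.sin_two_mul]; congr 1; ring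
      have hcc : 1 - Real.cos φ = 2 * Real.sin (φ/2)^2 := one_sub_cos_eq φ
      unfold gg
      rw [hsc, hcc]
      field_simp
      ring
    simp only [Pi.div_apply] at hB
    rw [hval] at hB
    apply hB.congr_of_eventuallyEq
    have hU : {y : ℝ | y ∈ Set.Ioo (-π) π ∧ y ≠ 0} ∈ nhds φ := by
      apply IsOpen.mem_nhds
      · exact (isOpen_Ioo).inter (isOpen_compl_singleton)
      · exact ⟨hφ, h0⟩
    filter_upwards [hU] with y hy
    obtain ⟨hy1, hy2⟩ := hy
    have hys : Real.sin (y/2) ≠ 0 := sin_half_ne hy1 hy2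
    have hyc : Real.cos (y/2) ≠ 0 := (cos_half_pos hy1).ne'
    unfold AA
    rw [Real.tan_eq_sin_div_cos]
    have hyt : Real.sin (y/2) / Real.cos (y/2) ≠ 0 := div_ne_zero hys hyc
    simp only [Pi.sub_apply, Pi.mul_apply, Pi.div_apply, id_eq]
    field_simp

lemma gg_contAt_zero : ContinuousAt gg 0 := by
  have h0 : gg 0 = 0 := by simp [gg]
  rw [ContinuousAt, h0]
  apply squeeze_zero_norm' (a := fun φ : ℝ => |φ|)
  · have : Metric.ball (0:ℝ) 1 ∈ nhds (0:ℝ) := Metric.ball_mem_nhds _ one_pos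
    filter_upwards [this] with φ hφ
    simp only [Metric.mem_ball, Real.dist_eq, sub_zero] at hφ
    exact gg_bound φ hφ.le
  · simpa using continuous_abs.tendsto (0:ℝ)

lemma gg_contOn {x : ℝ} (hx : x ∈ Set.Ioo (-π) π) : ContinuousOn gg (Set.uIcc 0 x) := by
  have hsub : Set.uIcc 0 x ⊆ Set.Ioo (-π) π := by
    intro t ht
    rw [Set.mem_uIcc] at ht
    have := Real.pi_pos
    constructor <;> rcases ht with ⟨h1, h2⟩ | ⟨h1, h2⟩ <;> linarith [hx.1, hx.2]
  intro t ht
  apply ContinuousAt.continuousWithinAt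
  rcases eq_or_ne t 0 with rfl | h0
  · exact gg_contAt_zero
  · have hden : (1 : ℝ) - Real.cos t ≠ 0 := by
      rw [one_sub_cos_eq]
      have := sin_half_ne (hsub ht) h0
      positivity
    exact ((continuous_id.sub Real.continuous_sin).continuousAt).div
      ((continuous_const.sub Real.continuous_cos).continuousAt) hden

lemma integral_gg {x : ℝ} (hx : x ∈ Set.Ioo (-π) π) :
    ∫ φ in (0:ℝ)..x, gg φ = AA x := by
  have hsub : Set.uIcc 0 x ⊆ Set.Ioo (-π) π := by
    intro t ht
    rw [Set.mem_uIcc] at ht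
    have := Real.pi_pos
    constructor <;> rcases ht with ⟨h1, h2⟩ | ⟨h1, h2⟩ <;> linarith [hx.1, hx.2]
  have h := intervalIntegral.integral_eq_sub_of_hasDerivAt
    (f := AA) (f' := gg) (a := (0:ℝ)) (b := x)
    (fun t ht => hasDerivAt_AA (hsub ht))
    ((gg_contOn hx).intervalIntegrable)
  rw [h, show AA 0 = 0 by simp [AA], sub_zero]

/-- The map `H(x) = x + tan(x/2) ∫₀ˣ (φ - sin φ)/(1 - cos φ) dφ` is a strictly
increasing continuous bijection from `(-π, π)` onto `ℝ`. -/
theorem stmt17 (H : ℝ → ℝ) (hH0 : H 0 = 0)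
    (hHdef : ∀ x, H x = x + Real.tan (x / 2) *
      ∫ φ in (0:ℝ)..x, (φ - Real.sin φ) / (1 - Real.cos φ)) :
    StrictMonoOn H (Set.Ioo (-π) π) ∧ ContinuousOn H (Set.Ioo (-π) π) ∧
      Set.BijOn H (Set.Ioo (-π) π) Set.univ := by
  have hEq : ∀ x ∈ Set.Ioo (-π) π, H x = 2 * Real.tan (x/2) := by
    intro x hx
    rcases eq_or_ne x 0 with rfl | h0
    · simp [hH0]
    · have hint : ∫ φ in (0:ℝ)..x, (φ - Real.sin φ) / (1 - Real.cos φ) = AA x :=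
        integral_gg hx
      rw [hHdef x, hint]
      have hs : Real.sin (x/2) ≠ 0 := sin_half_ne hx h0
      have hc : Real.cos (x/2) ≠ 0 := (cos_half_pos hx).ne'
      have ht : Real.tan (x/2) ≠ 0 := by
        rw [Real.tan_eq_sin_div_cos]; exact div_ne_zero hs hc
      unfold AA
      field_simp
      ring
  have hmono : StrictMonoOn H (Set.Ioo (-π) π) := by
    intro a ha b hb hab
    rw [hEq a ha, hEq b hb]
    have h1 : a/2 ∈ Set.Ioo (-(π/2)) (π/2) := ⟨by linarith [ha.1], by linarith [ha.2]⟩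
    have h2 : b/2 ∈ Set.Ioo (-(π/2)) (π/2) := ⟨by linarith [hb.1], by linarith [hb.2]⟩
    have := Real.strictMonoOn_tan h1 h2 (by linarith)
    linarith
  refine ⟨hmono, ?_, ?_⟩
  · intro a ha
    apply ContinuousAt.continuousWithinAt
    have hc : Real.cos (a/2) ≠ 0 := (cos_half_pos ha).ne'
    have htan : ContinuousAt (fun x : ℝ => Real.tan (x/2)) a :=
      ContinuousAt.comp (x := a) (g := Real.tan) (f := fun x : ℝ => x/2)
        (Real.continuousAt_tan.2 hc) ((continuous_id.div_const 2).continuousAt)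
    have hT : ContinuousAt (fun x : ℝ => 2 * Real.tan (x/2)) a := htan.const_mul 2
    apply hT.congr
    have hU : Set.Ioo (-π) π ∈ nhds a := isOpen_Ioo.mem_nhds ha
    filter_upwards [hU] with y hy
    exact (hEq y hy).symm
  · refine ⟨fun x _ => trivial, hmono.injOn, ?_⟩
    intro y _
    refine ⟨2 * Real.arctan (y/2), ?_, ?_⟩
    · obtain ⟨l, u⟩ := Real.arctan_mem_Ioo (y/2)
      exact ⟨by linarith, by linarith⟩
    · have hmem : 2 * Real.arctan (y/2) ∈ Set.Ioo (-π) π := by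
        obtain ⟨l, u⟩ := Real.arctan_mem_Ioo (y/2)
        exact ⟨by linarith, by linarith⟩
      rw [hEq _ hmem, show 2 * Real.arctan (y/2) / 2 = Real.arctan (y/2) by ring,
        Real.tan_arctan]
      ring
end

section
/- Let x(t) be a solution of ẋ = -sin x with x(t) ∈ (0, π) for all t, and define y(t) = x(t) + tan(x(t)/2) ∫₀^{x(t)} (φ - sin φ)/(1 - cos φ) dφ. Then ẏ = -y. -/
open Real

lemma stmt18_bound {φ : ℝ} (h0 : 0 < φ) (hπ : φ ≤ π) :
    ‖(φ - Real.sin φ) / (1 - Real.cos φ)‖ ≤ π := by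
  have hc : Real.cos φ < 1 := by
    have := Real.cos_lt_cos_of_nonneg_of_le_pi le_rfl hπ h0
    simpa using this
  have hden : 0 < 1 - Real.cos φ := by linarith
  have hnum0 : 0 ≤ φ - Real.sin φ := by
    have := Real.sin_le h0.le; linarith
  have hkey : φ * Real.cos φ ≤ Real.sin φ := by
    rcases le_or_gt (Real.cos φ) 0 with h | h
    · have : φ * Real.cos φ ≤ 0 := mul_nonpos_of_nonneg_of_nonpos h0.le h
      have hs : 0 ≤ Real.sin φ := Real.sin_nonneg_of_nonneg_of_le_pi h0.le hπ
      linarith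
    · have hlt : φ < π / 2 := by
        by_contra hge
        push_neg at hge
        have : Real.cos φ ≤ 0 := Real.cos_nonpos_of_pi_div_two_le_of_le hge (by linarith [Real.pi_pos])
        linarith
      have := Real.lt_tan h0 hlt
      rw [Real.tan_eq_sin_div_cos] at this
      exact le_of_lt ((lt_div_iff₀ h).mp this)
  have hle : (φ - Real.sin φ) / (1 - Real.cos φ) ≤ φ := by
    rw [div_le_iff₀ hden]; nlinarith
  have hge : 0 ≤ (φ - Real.sin φ) / (1 - Real.cos φ) := div_nonneg hnum0 hden.le
  rw [Real.norm_eq_abs, abs_of_nonneg hge]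
  linarith

/-- Along a solution `x(t) ∈ (0, π)` of `ẋ = -sin x`, the function
`y(t) = x(t) + tan(x(t)/2) ∫₀^{x(t)} (φ - sin φ)/(1 - cos φ) dφ` satisfies `ẏ = -y`. -/
theorem stmt18 (x y : ℝ → ℝ)
    (hrange : ∀ t, x t ∈ Set.Ioo 0 π)
    (hx : ∀ t, HasDerivAt x (-Real.sin (x t)) t)
    (hy : ∀ t, y t = x t + Real.tan (x t / 2) *
      ∫ φ in (0:ℝ)..(x t), (φ - Real.sin φ) / (1 - Real.cos φ)) :
    ∀ t, HasDerivAt y (-(y t)) t := by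
  intro t
  set f : ℝ → ℝ := fun φ => (φ - Real.sin φ) / (1 - Real.cos φ) with hf
  obtain ⟨hu0, huπ⟩ := hrange t
  set u := x t with hu
  -- measurability
  have hmeas : Measurable f := by
    apply Measurable.div
    · exact measurable_id.sub Real.continuous_sin.measurable
    · exact (continuous_const.sub Real.continuous_cos).measurable
  -- integrability on [0, u]
  have hInt : IntervalIntegrable f MeasureTheory.volume 0 u := by
    rw [intervalIntegrable_iff_integrableOn_Ioc_of_le hu0.le]
    apply MeasureTheory.Measure.integrableOn_of_bounded (M := π)
    · simp
    · exact hmeas.aestronglyMeasurable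
    · refine (MeasureTheory.ae_restrict_iff' measurableSet_Ioc).mpr ?_
      filter_upwards with φ hφ
      exact stmt18_bound hφ.1 (hφ.2.trans huπ.le)
  -- continuity at u
  have hcos1 : Real.cos u < 1 := by
    have := Real.cos_lt_cos_of_nonneg_of_le_pi le_rfl huπ.le hu0
    simpa using this
  have hcont : ContinuousAt f u := by
    apply ContinuousAt.div
    · exact (continuous_id.sub Real.continuous_sin).continuousAt
    · exact (continuous_const.sub Real.continuous_cos).continuousAt
    · intro h; rw [sub_eq_zero] at h; exact absurd h.symm (ne_of_lt hcos1)
  have hFTC : HasDerivAt (fun v => ∫ φ in (0:ℝ)..v, f φ) (f u) u :=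
    intervalIntegral.integral_hasDerivAt_right hInt
      ⟨Set.univ, Filter.univ_mem, hmeas.aestronglyMeasurable.restrict⟩ hcont
  -- derivative of tan(v/2)
  have hc2 : 0 < Real.cos (u / 2) :=
    Real.cos_pos_of_mem_Ioo ⟨by linarith [Real.pi_pos], by linarith⟩
  have hs2 : 0 < Real.sin (u / 2) :=
    Real.sin_pos_of_pos_of_lt_pi (by linarith) (by linarith [Real.pi_pos])
  have htan : HasDerivAt (fun v : ℝ => Real.tan (v / 2))
      (1 / Real.cos (u / 2) ^ 2 * (1 / 2)) u := by
    have h1 : HasDerivAt (fun v : ℝ => v / 2) (1 / 2) u := by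
      simpa using (hasDerivAt_id u).div_const 2
    exact (Real.hasDerivAt_tan hc2.ne').comp u h1
  -- F(v) = v + tan(v/2) * ∫₀^v f
  have hF : HasDerivAt (fun v => v + Real.tan (v / 2) * ∫ φ in (0:ℝ)..v, f φ)
      (1 + (1 / Real.cos (u / 2) ^ 2 * (1 / 2) * (∫ φ in (0:ℝ)..u, f φ)
        + Real.tan (u / 2) * f u)) u :=
    (hasDerivAt_id u).add (htan.mul hFTC)
  have hcomp := hF.comp t (hx t)
  have hyeq : y = fun s => x s + Real.tan (x s / 2) * ∫ φ in (0:ℝ)..(x s), f φ :=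
    funext hy
  rw [hyeq]
  convert hcomp using 1
  case e'_4 => rfl
  case e'_5 => rfl
  case e'_8 => rfl
  -- arithmetic identity
  rw [hf]
  have hsin : Real.sin u = 2 * Real.sin (u / 2) * Real.cos (u / 2) := by
    rw [← Real.sin_two_mul]; ring_nf
  have hcos : Real.cos u = 2 * Real.cos (u / 2) ^ 2 - 1 := by
    rw [← Real.cos_two_mul]; ring_nf
  have hpyth : Real.sin (u / 2) ^ 2 + Real.cos (u / 2) ^ 2 = 1 :=
    Real.sin_sq_add_cos_sq (u / 2)
  have htaneq : Real.tan (u / 2) = Real.sin (u / 2) / Real.cos (u / 2) :=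
    Real.tan_eq_sin_div_cos (u / 2)
  simp only [hu] at *
  rw [htaneq, hsin, hcos]
  have h1mc : 1 - (2 * Real.cos (u/2) ^ 2 - 1) = 2 * Real.sin (u/2) ^ 2 := by nlinarith
  rw [h1mc]
  rw [show u = x t from rfl]
  field_simp
  ring
end
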